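/- Let X be a real Banach space such that no point of ext(B_{X*}) is a point of continuity of the identity map I : (B_{X*}, w*) → (B_{X*}, w). Then no nonzero M-ideal J in X is weakly Hahn-Banach smooth. -/

import Mathlib

open NormedSpace Filter Topology

noncomputable section

/-- `f` is a point of continuity of the identity map
`I : (B_{E*}, w*) → (B_{E*}, w)` between the closed unit ball of the dual of `E`
with the relative weak-* topology and the same set with the relative weak topology. -/
def IsPoC {E : Type*} [NormedAddCommGroup E] [NormedSpace ℝ E] (f : StrongDual ℝ E) : Prop :=
  ContinuousWithinAt
    (fun g : WeakDual ℝ E => toWeakSpace ℝ (StrongDual ℝ E) (WeakDual.toStrongDual g))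
    {g : WeakDual ℝ E | ‖WeakDual.toStrongDual g‖ ≤ 1}
    (StrongDual.toWeakDual f)

/-- A closed subspace `Y` of `X` is an `M`-ideal if there is a continuous linear
projection `P` on `X*` with range the annihilator of `Y` such that
`‖f‖ = ‖P f‖ + ‖f - P f‖` for all `f ∈ X*`. -/
def IsMIdeal {X : Type*} [NormedAddCommGroup X] [NormedSpace ℝ X]
    (Y : Submodule ℝ X) : Prop :=
  IsClosed (Y : Set X) ∧
    ∃ P : StrongDual ℝ X →L[ℝ] StrongDual ℝ X,
      (∀ f, P (P f) = P f) ∧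
      Set.range P = {f : StrongDual ℝ X | ∀ y ∈ Y, f y = 0} ∧
      ∀ f : StrongDual ℝ X, ‖f‖ = ‖P f‖ + ‖f - P f‖

/-- A Banach space is weakly Hahn-Banach smooth if every norm-attaining functional has a
unique norm-preserving extension to the bidual. -/
def WeaklyHahnBanachSmooth (X : Type*) [NormedAddCommGroup X] [NormedSpace ℝ X] : Prop :=
  ∀ f : StrongDual ℝ X, (∃ x : X, ‖x‖ = 1 ∧ |f x| = ‖f‖) →
    ∀ F : StrongDual ℝ (StrongDual ℝ (StrongDual ℝ X)),
      (∀ x : X, F (inclusionInDoubleDual ℝ X x) = f x) →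
        (ContinuousLinearMap.hasOpNorm (E := StrongDual ℝ (StrongDual ℝ X)) (F := ℝ)
          (σ₁₂ := RingHom.id ℝ)).norm F = ‖f‖ →
        F = inclusionInDoubleDual ℝ (StrongDual ℝ X) f

lemma flip_injective {E : Type*} [NormedAddCommGroup E] [NormedSpace ℝ E] :
    Function.Injective ⇑(topDualPairing ℝ E).flip := by
  intro x y hxy
  exact (NormedSpace.eq_iff_forall_dual_eq ℝ).mpr fun g => LinearMap.congr_fun hxy g

lemma poc_of_whbs {E : Type*} [NormedAddCommGroup E] [NormedSpace ℝ E]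
    (hE : WeaklyHahnBanachSmooth E) (e : StrongDual ℝ E) (x : E) (hx : ‖x‖ = 1)
    (hex : e x = 1) (he : ‖e‖ = 1) : IsPoC e := by
  letI : NormedAddCommGroup (StrongDual ℝ (StrongDual ℝ (StrongDual ℝ E))) := @ContinuousLinearMap.toNormedAddCommGroup ℝ ℝ (StrongDual ℝ (StrongDual ℝ E)) ℝ _ _ _ _ _ _ (RingHom.id ℝ) _
  unfold IsPoC
  set S : Set (WeakDual ℝ E) := {g : WeakDual ℝ E | ‖WeakDual.toStrongDual g‖ ≤ 1} with hS
  set l : Filter (WeakDual ℝ E) := 𝓝[S] (StrongDual.toWeakDual e) with hl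
  by_contra hc
  rw [ContinuousWithinAt, tendsto_def] at hc
  push_neg at hc
  obtain ⟨V, hV, hVnl⟩ := hc
  set φ : WeakDual ℝ E → WeakSpace ℝ (StrongDual ℝ E) :=
    fun g : WeakDual ℝ E => toWeakSpace ℝ (StrongDual ℝ E) (WeakDual.toStrongDual g) with hφ
  set m : Filter (WeakDual ℝ E) := l ⊓ 𝓟 (φ ⁻¹' V)ᶜ with hm
  have hmne : m.NeBot := by
    rw [neBot_iff, hm, Ne, inf_principal_eq_bot, compl_compl]
    exact hVnl
  set U := Ultrafilter.of m with hU
  have hUm : (U : Filter (WeakDual ℝ E)) ≤ m := Ultrafilter.of_le m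
  have hUl : (U : Filter (WeakDual ℝ E)) ≤ l := hUm.trans inf_le_left
  have hUnhds : (U : Filter (WeakDual ℝ E)) ≤ 𝓝 (StrongDual.toWeakDual e) :=
    hUl.trans nhdsWithin_le_nhds
  have hSU : S ∈ U := hUl self_mem_nhdsWithin
  -- the map into the weak-star topology of the triple dual
  set ψ : WeakDual ℝ E → WeakDual ℝ (StrongDual ℝ (StrongDual ℝ E)) :=
    fun g => StrongDual.toWeakDual
      (inclusionInDoubleDual ℝ (StrongDual ℝ E) (WeakDual.toStrongDual g)) with hψ
  set K : Set (WeakDual ℝ (StrongDual ℝ (StrongDual ℝ E))) :=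
    WeakDual.toStrongDual (𝕜 := ℝ) (E := StrongDual ℝ (StrongDual ℝ E)) ⁻¹' Metric.closedBall 0 1 with hK
  have hKcomp : IsCompact K := WeakDual.isCompact_closedBall (𝕜 := ℝ) (E := StrongDual ℝ (StrongDual ℝ E)) 0 1
  have hψS : ∀ g ∈ S, ψ g ∈ K := by
    intro g hg
    simp only [hK, Set.mem_preimage, Metric.mem_closedBall, dist_zero_right]
    exact le_trans (double_dual_bound ℝ (StrongDual ℝ E) _) hg
  have hKU : K ∈ Ultrafilter.map ψ U := by
    refine mem_map.mpr (mem_of_superset hSU ?_)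
    exact fun g hg => hψS g hg
  obtain ⟨F₀, hF₀K, hUF₀⟩ := hKcomp.ultrafilter_le_nhds (Ultrafilter.map ψ U)
    (le_principal_iff.mpr hKU)
  set F : StrongDual ℝ (StrongDual ℝ (StrongDual ℝ E)) := WeakDual.toStrongDual F₀ with hF
  have hTψ : Tendsto ψ (U : Filter _) (𝓝 F₀) := by
    rw [Tendsto, ← Ultrafilter.coe_map]; exact hUF₀
  -- evaluation convergence along U
  have heval : ∀ Φ : StrongDual ℝ (StrongDual ℝ E),
      Tendsto (fun g : WeakDual ℝ E => Φ (WeakDual.toStrongDual g)) (U : Filter _) (𝓝 (F Φ)) := by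
    intro Φ
    have h1 : Tendsto (fun G : WeakDual ℝ (StrongDual ℝ (StrongDual ℝ E)) => G Φ)
        (𝓝 F₀) (𝓝 (F₀ Φ)) := (WeakDual.eval_continuous Φ).tendsto F₀
    exact h1.comp hTψ
  have hevalE : ∀ y : E,
      Tendsto (fun g : WeakDual ℝ E => g y) (U : Filter _) (𝓝 (e y)) := by
    intro y
    have h1 : Tendsto (fun g : WeakDual ℝ E => g y)
        (𝓝 (StrongDual.toWeakDual e)) (𝓝 (e y)) :=
      (WeakDual.eval_continuous y).tendsto _
    exact h1.mono_left hUnhds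
  have hFext : ∀ y : E, F (inclusionInDoubleDual ℝ E y) = e y := by
    intro y
    exact tendsto_nhds_unique (heval (inclusionInDoubleDual ℝ E y)) (hevalE y)
  have hFle : ‖F‖ ≤ 1 := by
    have := hF₀K
    simpa only [hK, Set.mem_preimage, Metric.mem_closedBall, dist_zero_right] using this
  have hFnorm : ‖F‖ = ‖e‖ := by
    rw [he]
    refine le_antisymm hFle ?_
    have h1 : F (inclusionInDoubleDual ℝ E x) = 1 := by rw [hFext x, hex]
    have h2 : ‖F (inclusionInDoubleDual ℝ E x)‖ ≤ ‖F‖ * ‖inclusionInDoubleDual ℝ E x‖ :=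
      ContinuousLinearMap.le_opNorm (𝕜 := ℝ) (𝕜₂ := ℝ) (σ₁₂ := RingHom.id ℝ) (E := StrongDual ℝ (StrongDual ℝ E)) (F := ℝ) (f := F) _
    have h3 : ‖inclusionInDoubleDual ℝ E x‖ ≤ 1 := by
      calc ‖inclusionInDoubleDual ℝ E x‖ ≤ ‖x‖ := double_dual_bound ℝ E x
      _ = 1 := hx
    rw [h1] at h2
    simp only [norm_one] at h2
    nlinarith [norm_nonneg F]
  have hFe : F = inclusionInDoubleDual ℝ (StrongDual ℝ E) e :=
    hE e ⟨x, hx, by rw [hex, he]; norm_num⟩ F hFext hFnorm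
  -- now derive weak convergence along U, contradiction
  have hweak : Tendsto φ (U : Filter _) (𝓝 (φ (StrongDual.toWeakDual e))) := by
    refine (WeakBilin.tendsto_iff_forall_eval_tendsto (topDualPairing ℝ (StrongDual ℝ E)).flip flip_injective).mpr ?_
    intro Φ
    have h1 := heval Φ
    rw [hFe] at h1
    exact h1
  have hmemU : φ ⁻¹' V ∈ U := hweak hV
  have hmemU' : (φ ⁻¹' V)ᶜ ∈ U := hUm (mem_inf_of_right (mem_principal_self _))
  exact (Ultrafilter.compl_mem_iff_notMem.mp hmemU') hmemU

instance weakDual_locallyConvex {E : Type*} [NormedAddCommGroup E] [NormedSpace ℝ E] :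
    LocallyConvexSpace ℝ (WeakDual ℝ E) :=
  WeakBilin.locallyConvexSpace

lemma exists_extreme_face {E : Type*} [NormedAddCommGroup E] [NormedSpace ℝ E]
    (x : E) (hx : ‖x‖ = 1) :
    ∃ e : StrongDual ℝ E, e x = 1 ∧ ‖e‖ = 1 ∧
      ∀ u₁ u₂ : StrongDual ℝ E, ‖u₁‖ ≤ 1 → ‖u₂‖ ≤ 1 → e ∈ openSegment ℝ u₁ u₂ →
        u₁ = e ∧ u₂ = e := by
  classical
  set B : Set (WeakDual ℝ E) := WeakDual.toStrongDual ⁻¹' Metric.closedBall 0 1 with hB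
  have hBcomp : IsCompact B := WeakDual.isCompact_closedBall (0 : StrongDual ℝ E) 1
  set T : Set (WeakDual ℝ E) := B ∩ {g : WeakDual ℝ E | g x = 1} with hT
  have hTcomp : IsCompact T :=
    hBcomp.inter_right (isClosed_singleton.preimage (WeakDual.eval_continuous x))
  have hTne : T.Nonempty := by
    obtain ⟨g, hg1, hg2⟩ := exists_dual_vector ℝ x (by rw [← norm_ne_zero_iff, hx]; norm_num)
    refine ⟨StrongDual.toWeakDual g, ?_, ?_⟩
    · simp only [hB, Set.mem_preimage, Metric.mem_closedBall, dist_zero_right]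
      exact le_of_eq hg1
    · simp only [Set.mem_setOf_eq]
      show g x = 1
      rw [hg2, hx]; norm_num
  obtain ⟨e₀, he₀⟩ := hTcomp.extremePoints_nonempty hTne
  rw [mem_extremePoints] at he₀
  obtain ⟨⟨he₀B, he₀x⟩, he₀ext⟩ := he₀
  have he₀x : e₀ x = 1 := he₀x
  have he₀le : ‖WeakDual.toStrongDual e₀‖ ≤ 1 := by
    simpa only [hB, Set.mem_preimage, Metric.mem_closedBall, dist_zero_right] using he₀B
  refine ⟨WeakDual.toStrongDual e₀, he₀x, ?_, ?_⟩
  · refine le_antisymm he₀le ?_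
    have := (WeakDual.toStrongDual e₀).le_opNorm x
    rw [hx, mul_one] at this
    calc (1 : ℝ) = e₀ x := he₀x.symm
      _ ≤ ‖(WeakDual.toStrongDual e₀) x‖ := le_abs_self _
      _ ≤ ‖WeakDual.toStrongDual e₀‖ := this
  · intro u₁ u₂ h₁ h₂ hseg
    obtain ⟨a, b, ha, hb, hab, hsum⟩ := hseg
    have key : ∀ u : StrongDual ℝ E, ‖u‖ ≤ 1 → u x ≤ 1 := by
      intro u hu
      have := u.le_opNorm x
      rw [hx, mul_one] at this
      calc u x ≤ ‖u x‖ := le_abs_self _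
        _ ≤ ‖u‖ := this
        _ ≤ 1 := hu
    have hval : a * u₁ x + b * u₂ x = 1 := by
      have : (a • u₁ + b • u₂) x = (WeakDual.toStrongDual e₀) x := by rw [hsum]
      simpa [he₀x] using this
    have hx1 : u₁ x = 1 := by nlinarith [key u₁ h₁, key u₂ h₂]
    have hx2 : u₂ x = 1 := by nlinarith [key u₁ h₁, key u₂ h₂]
    have hw : ∀ u : StrongDual ℝ E, ‖u‖ ≤ 1 → u x = 1 →
        (StrongDual.toWeakDual u) ∈ T := by
      intro u hu hux
      constructor
      · exact mem_closedBall_zero_iff.mpr hu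
      · exact hux
    have := he₀ext (StrongDual.toWeakDual u₁) (hw u₁ h₁ hx1)
      (StrongDual.toWeakDual u₂) (hw u₂ h₂ hx2)
      ⟨a, b, ha, hb, hab, hsum⟩
    exact ⟨congrArg WeakDual.toStrongDual this.1, congrArg WeakDual.toStrongDual this.2⟩

section MIdealAux
variable {X : Type*} [NormedAddCommGroup X] [NormedSpace ℝ X] (J : Submodule ℝ X)
  (P : StrongDual ℝ X →L[ℝ] StrongDual ℝ X)

/-- Restriction of a functional to a subspace. -/
def resJ (f : StrongDual ℝ X) : StrongDual ℝ ↥J := f.comp J.subtypeL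

lemma resJ_apply (f : StrongDual ℝ X) (y : ↥J) : resJ J f y = f ↑y := rfl

lemma resJ_norm_le (f : StrongDual ℝ X) : ‖resJ J f‖ ≤ ‖f‖ := by
  refine ContinuousLinearMap.opNorm_le_bound _ (norm_nonneg f) fun y => ?_
  calc ‖resJ J f y‖ = ‖f ↑y‖ := rfl
    _ ≤ ‖f‖ * ‖(y : X)‖ := f.le_opNorm _
    _ = ‖f‖ * ‖y‖ := rfl

lemma resJ_add (f g : StrongDual ℝ X) : resJ J (f + g) = resJ J f + resJ J g := by
  ext y; rfl

lemma resJ_smul (c : ℝ) (f : StrongDual ℝ X) : resJ J (c • f) = c • resJ J f := by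
  ext y; rfl

variable {J P}

variable (hPP : ∀ f, P (P f) = P f)
  (hrange : Set.range P = {f : StrongDual ℝ X | ∀ y ∈ J, f y = 0})
  (hnorm : ∀ f : StrongDual ℝ X, ‖f‖ = ‖P f‖ + ‖f - P f‖)

include hrange in
lemma P_ann : ∀ f : StrongDual ℝ X, ∀ y : X, y ∈ J → P f y = 0 := by
  intro f y hy
  have : P f ∈ Set.range P := ⟨f, rfl⟩
  rw [hrange] at this
  exact this y hy

include hPP hrange in
lemma P_fix : ∀ f : StrongDual ℝ X, (∀ y ∈ J, f y = 0) → P f = f := by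
  intro f hf
  have : f ∈ Set.range P := by rw [hrange]; exact hf
  obtain ⟨g, hg⟩ := this
  rw [← hg, hPP]

include hPP hrange hnorm in
lemma norm_le_res (f : StrongDual ℝ X) (hf : P f = 0) : ‖f‖ ≤ ‖resJ J f‖ := by
  obtain ⟨g, hgext, hgnorm⟩ := exists_extension_norm_eq J (resJ J f)
  have hvan : ∀ y ∈ J, (f - g) y = 0 := by
    intro y hy
    have := hgext ⟨y, hy⟩
    simp only [ContinuousLinearMap.sub_apply]
    rw [this, resJ_apply]
    simp
  have hfg : P (f - g) = f - g := P_fix hPP hrange _ hvan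
  have hPg : P g = g - f := by
    rw [map_sub, hf, zero_sub] at hfg
    linear_combination (norm := module) -hfg
  have h1 := hnorm g
  rw [hPg] at h1
  have h2 : g - (g - f) = f := by abel
  rw [h2] at h1
  have h3 : ‖f‖ ≤ ‖g‖ := by linarith [norm_nonneg (g - f)]
  rw [hgnorm] at h3
  exact h3

end MIdealAux

set_option maxHeartbeats 1000000 in
/-- If no extreme point of `B_{X*}` is a point of continuity of
`I : (B_{X*}, w*) → (B_{X*}, w)`, then no nonzero `M`-ideal in `X` is weakly
Hahn-Banach smooth. -/
theorem stmt_11 {X : Type*} [NormedAddCommGroup X] [NormedSpace ℝ X] [CompleteSpace X]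
    (h : ∀ f ∈ Set.extremePoints ℝ (Metric.closedBall (0 : StrongDual ℝ X) 1), ¬ IsPoC f)
    (J : Submodule ℝ X) (hJ : IsMIdeal J) (hJne : J ≠ ⊥) :
    ¬ WeaklyHahnBanachSmooth ↥J := by
  intro hW
  obtain ⟨hclosed, P, hPP, hrange, hnorm⟩ := hJ
  -- a unit vector in J
  obtain ⟨y₀, hy₀J, hy₀ne⟩ := (Submodule.ne_bot_iff J).mp hJne
  set x : ↥J := ⟨‖y₀‖⁻¹ • y₀, J.smul_mem _ hy₀J⟩ with hxdef
  have hxnorm : ‖x‖ = 1 := by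
    show ‖‖y₀‖⁻¹ • y₀‖ = 1
    rw [norm_smul, norm_inv, norm_norm]
    exact inv_mul_cancel₀ (norm_ne_zero_iff.mpr hy₀ne)
  -- extreme point of the dual ball of J attaining its norm at x
  obtain ⟨e, hex, hen, heext⟩ := exists_extreme_face x hxnorm
  -- J is weakly Hahn-Banach smooth, so e is a point of continuity for J
  have hPoCJ : IsPoC e := poc_of_whbs hW e x hxnorm hex hen
  -- extend e to an element of the kernel of P
  obtain ⟨g₀, hg₀ext, hg₀norm⟩ := exists_extension_norm_eq J e
  set et : StrongDual ℝ X := g₀ - P g₀ with hetdef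
  have hPet : P et = 0 := by rw [hetdef, map_sub, hPP, sub_self]
  have hret : resJ J et = e := by
    ext y
    rw [resJ_apply]
    show g₀ ↑y - P g₀ ↑y = e y
    rw [P_ann hrange g₀ ↑y y.2, hg₀ext y, sub_zero]
  have hetnorm : ‖et‖ = 1 := by
    refine le_antisymm ?_ ?_
    · calc ‖et‖ ≤ ‖resJ J et‖ := norm_le_res hPP hrange hnorm et hPet
        _ = 1 := by rw [hret, hen]
    · calc (1 : ℝ) = ‖resJ J et‖ := by rw [hret, hen]
        _ ≤ ‖et‖ := resJ_norm_le J et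
  -- uniqueness of norm-one extensions into the kernel of P
  have L2 : ∀ u : StrongDual ℝ X, ‖u‖ ≤ 1 → resJ J u = e → u = et := by
    intro u hu hres
    have hres' : resJ J (u - P u) = e := by
      ext y
      rw [resJ_apply]
      show u ↑y - P u ↑y = e y
      rw [P_ann hrange u ↑y y.2, sub_zero, ← resJ_apply J u y, hres]
    have h1 : (1 : ℝ) ≤ ‖u - P u‖ := by
      calc (1 : ℝ) = ‖resJ J (u - P u)‖ := by rw [hres', hen]
        _ ≤ ‖u - P u‖ := resJ_norm_le J _
    have h2 := hnorm u
    have h3 : ‖P u‖ = 0 := by linarith [norm_nonneg (P u)]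
    have h4 : P u = 0 := norm_eq_zero.mp h3
    have h5 : P (u - et) = 0 := by rw [map_sub, h4, hPet, sub_self]
    have h6 : resJ J (u - et) = 0 := by
      ext y
      rw [resJ_apply]
      show u ↑y - et ↑y = 0
      have e1 : u ↑y = e y := by rw [← resJ_apply J u y, hres]
      have e2 : et ↑y = e y := by rw [← resJ_apply J et y, hret]
      rw [e1, e2, sub_self]
    have h7 : ‖u - et‖ ≤ 0 := by
      calc ‖u - et‖ ≤ ‖resJ J (u - et)‖ := norm_le_res hPP hrange hnorm _ h5
        _ = 0 := by rw [h6]; exact ContinuousLinearMap.opNorm_zero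
    have := norm_eq_zero.mp (le_antisymm h7 (norm_nonneg _))
    rwa [sub_eq_zero] at this
  -- et is an extreme point of the dual ball of X
  have hext : et ∈ Set.extremePoints ℝ (Metric.closedBall (0 : StrongDual ℝ X) 1) := by
    rw [mem_extremePoints]
    constructor
    · rw [Metric.mem_closedBall, dist_zero_right, hetnorm]
    · intro u₁ hu₁ u₂ hu₂ hseg
      rw [Metric.mem_closedBall, dist_zero_right] at hu₁ hu₂
      obtain ⟨a, b, ha, hb, hab, hsum⟩ := hseg
      have hsumres : e ∈ openSegment ℝ (resJ J u₁) (resJ J u₂) := by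
        refine ⟨a, b, ha, hb, hab, ?_⟩
        ext y
        have := congrArg (fun v : StrongDual ℝ X => v ↑y) hsum
        simp only [ContinuousLinearMap.add_apply, ContinuousLinearMap.coe_smul',
          Pi.smul_apply, smul_eq_mul] at this ⊢
        rw [← hret]
        exact this
      have h12 := heext (resJ J u₁) (resJ J u₂)
        (le_trans (resJ_norm_le J u₁) hu₁) (le_trans (resJ_norm_le J u₂) hu₂) hsumres
      exact ⟨L2 u₁ hu₁ h12.1, L2 u₂ hu₂ h12.2⟩
  -- et is a point of continuity
  have hPoC : IsPoC et := by
    -- section operator : extend a functional on J into ker P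
    have hsect : ∀ u : StrongDual ℝ ↥J, ∃ v : StrongDual ℝ X, P v = 0 ∧ resJ J v = u := by
      intro u
      obtain ⟨g, hgext, -⟩ := exists_extension_norm_eq J u
      refine ⟨g - P g, by rw [map_sub, hPP, sub_self], ?_⟩
      ext y
      rw [resJ_apply]
      show g ↑y - P g ↑y = u y
      rw [P_ann hrange g ↑y y.2, hgext y, sub_zero]
    choose sec hsecP hsecres using hsect
    have huniq : ∀ v : StrongDual ℝ X, P v = 0 → v = sec (resJ J v) := by
      intro v hv
      have h5 : P (v - sec (resJ J v)) = 0 := by rw [map_sub, hv, hsecP, sub_self]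
      have h6 : resJ J (v - sec (resJ J v)) = 0 := by
        ext y
        rw [resJ_apply]
        show v ↑y - sec (resJ J v) ↑y = 0
        have e1 : sec (resJ J v) ↑y = v ↑y :=
          congrArg (fun w : StrongDual ℝ ↥J => w y) (hsecres (resJ J v))
        rw [e1, sub_self]
      have h7 : ‖v - sec (resJ J v)‖ ≤ 0 := by
        calc ‖v - sec (resJ J v)‖ ≤ ‖resJ J (v - sec (resJ J v))‖ :=
              norm_le_res hPP hrange hnorm _ h5
          _ = 0 := by rw [h6]; exact ContinuousLinearMap.opNorm_zero
      have h8 := norm_eq_zero.mp (le_antisymm h7 (norm_nonneg _))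
      rwa [sub_eq_zero] at h8
    have hsecnorm : ∀ u, ‖sec u‖ ≤ ‖u‖ := fun u =>
      le_trans (norm_le_res hPP hrange hnorm _ (hsecP u)) (by rw [hsecres])
    have hsecadd : ∀ u v, sec (u + v) = sec u + sec v := by
      intro u v
      have h1 : P (sec u + sec v) = 0 := by rw [map_add, hsecP, hsecP, add_zero]
      have h2 := huniq (sec u + sec v) h1
      rw [resJ_add, hsecres, hsecres] at h2
      exact h2.symm
    have hsecsmul : ∀ (c : ℝ) u, sec (c • u) = c • sec u := by
      intro c u
      have h1 : P (c • sec u) = 0 := by rw [map_smul, hsecP, smul_zero]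
      have h2 := huniq (c • sec u) h1
      rw [resJ_smul, hsecres] at h2
      exact h2.symm
    unfold IsPoC
    rw [ContinuousWithinAt]
    refine (WeakBilin.tendsto_iff_forall_eval_tendsto (topDualPairing ℝ (StrongDual ℝ X)).flip flip_injective).mpr ?_
    intro Φ
    -- build the functional Ψ on the dual of J corresponding to Φ via sec
    set Ψlin : StrongDual ℝ ↥J →ₗ[ℝ] ℝ :=
      { toFun := fun u => Φ (sec u)
        map_add' := fun u v => by
          show Φ (sec (u + v)) = Φ (sec u) + Φ (sec v)
          rw [hsecadd, map_add]
        map_smul' := fun c u => by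
          show Φ (sec (c • u)) = c • Φ (sec u)
          rw [hsecsmul, map_smul] } with hΨlin
    have hΨbound : ∀ u, ‖Ψlin u‖ ≤ ‖Φ‖ * ‖u‖ := by
      intro u
      calc ‖Ψlin u‖ = ‖Φ (sec u)‖ := rfl
        _ ≤ ‖Φ‖ * ‖sec u‖ := Φ.le_opNorm _
        _ ≤ ‖Φ‖ * ‖u‖ := mul_le_mul_of_nonneg_left (hsecnorm u) (norm_nonneg Φ)
    set Ψ : StrongDual ℝ (StrongDual ℝ ↥J) := LinearMap.mkContinuous (E := StrongDual ℝ ↥J) Ψlin ‖Φ‖ hΨbound with hΨ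
    have hΨv : ∀ v : StrongDual ℝ X, P v = 0 → Ψ (resJ J v) = Φ v := by
      intro v hv
      show Φ (sec (resJ J v)) = Φ v
      rw [← huniq v hv]
    show Tendsto (fun g : WeakDual ℝ X => Φ (WeakDual.toStrongDual g))
      (𝓝[{g : WeakDual ℝ X | ‖WeakDual.toStrongDual g‖ ≤ 1}]
        (StrongDual.toWeakDual et)) (𝓝 (Φ et))
    set l : Filter (WeakDual ℝ X) :=
      𝓝[{g : WeakDual ℝ X | ‖WeakDual.toStrongDual g‖ ≤ 1}]
        (StrongDual.toWeakDual et) with hldef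
    -- the restriction map is weak-star to weak-star continuous
    set ρ : WeakDual ℝ X → WeakDual ℝ ↥J :=
      fun g => StrongDual.toWeakDual (resJ J (WeakDual.toStrongDual g)) with hρ
    have hρcont : Continuous ρ :=
      WeakBilin.continuous_of_continuous_eval _ fun y => WeakDual.eval_continuous (y : X)
    have hρtend : Tendsto ρ l
        (𝓝[{g : WeakDual ℝ ↥J | ‖WeakDual.toStrongDual g‖ ≤ 1}]
          (StrongDual.toWeakDual e)) := by
      rw [tendsto_nhdsWithin_iff]
      constructor
      · have h1 : Tendsto ρ (𝓝 (StrongDual.toWeakDual et))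
            (𝓝 (ρ (StrongDual.toWeakDual et))) := hρcont.tendsto _
        have h2 : ρ (StrongDual.toWeakDual et) = StrongDual.toWeakDual e := by
          show StrongDual.toWeakDual (resJ J et) = StrongDual.toWeakDual e
          rw [hret]
        rw [h2] at h1
        exact h1.mono_left nhdsWithin_le_nhds
      · filter_upwards [self_mem_nhdsWithin] with g hg
        exact le_trans (resJ_norm_le J _) hg
    have hPoCtend := hPoCJ
    unfold IsPoC at hPoCtend
    rw [ContinuousWithinAt] at hPoCtend
    have hcomp1 : Tendsto (fun g : WeakDual ℝ X =>
        toWeakSpace ℝ (StrongDual ℝ ↥J) (WeakDual.toStrongDual (ρ g))) l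
        (𝓝 (toWeakSpace ℝ (StrongDual ℝ ↥J) e)) := hPoCtend.comp hρtend
    have hΨtend : Tendsto (fun g : WeakDual ℝ X =>
        Ψ (resJ J (WeakDual.toStrongDual g))) l (𝓝 (Ψ e)) := by
      have hev : Continuous fun w : WeakSpace ℝ (StrongDual ℝ ↥J) =>
          (topDualPairing ℝ (StrongDual ℝ ↥J)).flip w Ψ := WeakBilin.eval_continuous _ Ψ
      exact (hev.tendsto _).comp hcomp1
    -- the P-component tends to zero in norm
    have hevalx : Tendsto (fun g : WeakDual ℝ X => (WeakDual.toStrongDual g) ↑x) l (𝓝 1) := by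
      have h1 : Tendsto (fun g : WeakDual ℝ X => g (↑x : X))
          (𝓝 (StrongDual.toWeakDual et)) (𝓝 (et ↑x)) :=
        (WeakDual.eval_continuous (↑x : X)).tendsto _
      have h2 : et ↑x = 1 := by
        have e1 : et ↑x = e x := congrArg (fun w : StrongDual ℝ ↥J => w x) hret
        rw [e1, hex]
      rw [h2] at h1
      exact h1.mono_left nhdsWithin_le_nhds
    have hPnorm : Tendsto (fun g : WeakDual ℝ X =>
        ‖P (WeakDual.toStrongDual g)‖) l (𝓝 0) := by
      have hub : Tendsto (fun g : WeakDual ℝ X =>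
          1 - (WeakDual.toStrongDual g) ↑x) l (𝓝 0) := by
        have h3 := (tendsto_const_nhds (x := (1 : ℝ)) (f := l)).sub hevalx
        simpa using h3
      refine tendsto_of_tendsto_of_tendsto_of_le_of_le' tendsto_const_nhds hub ?_ ?_
      · filter_upwards with g using norm_nonneg _
      · filter_upwards [self_mem_nhdsWithin] with g hg
        have h1 := hnorm (WeakDual.toStrongDual g)
        have hg' : ‖WeakDual.toStrongDual g‖ ≤ 1 := hg
        have e0 : P (WeakDual.toStrongDual g) ↑x = 0 := P_ann hrange _ ↑x x.2
        have h2 : (WeakDual.toStrongDual g) ↑x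
            ≤ ‖WeakDual.toStrongDual g - P (WeakDual.toStrongDual g)‖ := by
          have e1 : (WeakDual.toStrongDual g - P (WeakDual.toStrongDual g)) ↑x
              = (WeakDual.toStrongDual g) ↑x := by
            rw [ContinuousLinearMap.sub_apply, e0, sub_zero]
          calc (WeakDual.toStrongDual g) ↑x
              = (WeakDual.toStrongDual g - P (WeakDual.toStrongDual g)) ↑x := e1.symm
            _ ≤ ‖(WeakDual.toStrongDual g - P (WeakDual.toStrongDual g)) ↑x‖ := le_abs_self _
            _ ≤ ‖WeakDual.toStrongDual g - P (WeakDual.toStrongDual g)‖ * ‖(↑x : X)‖ :=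
                ContinuousLinearMap.le_opNorm _ _
            _ = ‖WeakDual.toStrongDual g - P (WeakDual.toStrongDual g)‖ := by
                rw [show ‖(↑x : X)‖ = 1 from hxnorm, mul_one]
        linarith
    have hPΦ : Tendsto (fun g : WeakDual ℝ X =>
        Φ (P (WeakDual.toStrongDual g))) l (𝓝 0) := by
      refine squeeze_zero_norm (fun g => Φ.le_opNorm _) ?_
      have h3 := hPnorm.const_mul ‖Φ‖
      simpa using h3
    -- combine
    have hfun : ∀ g : WeakDual ℝ X, Φ (WeakDual.toStrongDual g)
        = Φ (P (WeakDual.toStrongDual g)) + Ψ (resJ J (WeakDual.toStrongDual g)) := by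
      intro g
      have h1 : resJ J (WeakDual.toStrongDual g - P (WeakDual.toStrongDual g))
          = resJ J (WeakDual.toStrongDual g) := by
        ext y
        rw [resJ_apply, resJ_apply]
        rw [ContinuousLinearMap.sub_apply, P_ann hrange _ ↑y y.2, sub_zero]
      have h2 : Ψ (resJ J (WeakDual.toStrongDual g))
          = Φ (WeakDual.toStrongDual g - P (WeakDual.toStrongDual g)) := by
        rw [← h1]
        exact hΨv _ (by rw [map_sub, hPP, sub_self])
      rw [h2, map_sub]
      ring
    have hsum := hPΦ.add hΨtend
    rw [zero_add] at hsum
    have hval : Ψ e = Φ et := by rw [← hret]; exact hΨv et hPet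
    rw [hval] at hsum
    exact hsum.congr fun g => (hfun g).symm
  exact h et hext hPoC
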